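/- arXiv:2505.10980 — 7 statements merged into one kernel-verified Lean document; each statement's English description precedes it below -/
import Mathlib

section
/- For every smooth function v : ℝ → ℝ, the following are equivalent: (i) for all j, m ∈ ℕ, t⁻¹ · d_{j,m}(t·v, 𝒮) → 0 as t → 0⁺; (ii) tsupport v ⊆ [0, ∞) or tsupport v ⊆ (−∞, 0]. That is, the adjacent cone of 𝒮 = 𝒮₊ ∪ 𝒮₋ at the zero function, computed with respect to the compact–open C^∞ seminorms, equals 𝒮₊ ∪ 𝒮₋ itself. -/
open Filter Topology Set

private lemma iter_zero_fun (m : ℕ) : iteratedDeriv m (fun _ : ℝ => (0:ℝ)) = fun _ => 0 := by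
  induction m with
  | zero => simp [iteratedDeriv_zero]
  | succ n ih => rw [iteratedDeriv_succ, ih]; funext x; simp

/-- The adjacent cone at the zero function of `𝒮 = 𝒮₊ ∪ 𝒮₋` (smooth functions supported in
`[0, ∞)`, resp. `(-∞, 0]`), computed with respect to the compact–open `C^∞` seminorms
`‖f‖_{j,m} = sup_{x ∈ [-j,j]} |f^(m)(x)|`, equals `𝒮₊ ∪ 𝒮₋` itself. -/
theorem stmt_3 (v : ℝ → ℝ) (hv : ContDiff ℝ (⊤ : ℕ∞) v) :
    (∀ j m : ℕ, Tendsto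
        (fun t : ℝ =>
          t⁻¹ * ⨅ h : {g : ℝ → ℝ | ContDiff ℝ (⊤ : ℕ∞) g ∧
              (tsupport g ⊆ Set.Ici (0 : ℝ) ∨ tsupport g ⊆ Set.Iic (0 : ℝ))},
            ⨆ x : Set.Icc (-(j : ℝ)) (j : ℝ),
              |iteratedDeriv m (t • v - (h : ℝ → ℝ)) (x : ℝ)|)
        (𝓝[>] (0 : ℝ)) (𝓝 0)) ↔
    (tsupport v ⊆ Set.Ici (0 : ℝ) ∨ tsupport v ⊆ Set.Iic (0 : ℝ)) := by
  set S := {g : ℝ → ℝ | ContDiff ℝ (⊤ : ℕ∞) g ∧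
      (tsupport g ⊆ Set.Ici (0 : ℝ) ∨ tsupport g ⊆ Set.Iic (0 : ℝ))} with hS
  have hzero : (fun _ : ℝ => (0:ℝ)) ∈ S := by
    refine ⟨contDiff_const, Or.inl ?_⟩
    have : tsupport (fun _ : ℝ => (0:ℝ)) = ∅ := by
      simp [tsupport, Function.support]
    simp [this]
  haveI : Nonempty S := ⟨⟨_, hzero⟩⟩
  constructor
  · intro H
    by_contra hcon
    push_neg at hcon
    obtain ⟨h1, h2⟩ := hcon
    obtain ⟨a, ha', ha⟩ := not_subset.1 h1
    obtain ⟨b, hb', hb⟩ := not_subset.1 h2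
    have ha0 : a < 0 := lt_of_not_ge (by simpa using ha)
    have hb0 : 0 < b := lt_of_not_ge (by simpa using hb)
    -- points where v ≠ 0 on each side
    obtain ⟨x₀, hx₀0, hvx₀⟩ : ∃ x, x < 0 ∧ v x ≠ 0 := by
      rcases mem_closure_iff.1 ha' (Iio 0) isOpen_Iio ha0 with ⟨x, hx1, hx2⟩
      exact ⟨x, hx1, hx2⟩
    obtain ⟨x₁, hx₁0, hvx₁⟩ : ∃ x, 0 < x ∧ v x ≠ 0 := by
      rcases mem_closure_iff.1 hb' (Ioi 0) isOpen_Ioi hb0 with ⟨x, hx1, hx2⟩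
      exact ⟨x, hx1, hx2⟩
    set c : ℝ := min |v x₀| |v x₁| with hc
    have hcpos : 0 < c := lt_min (abs_pos.2 hvx₀) (abs_pos.2 hvx₁)
    set j : ℕ := ⌈max (-x₀) x₁⌉₊ with hj
    have hjx₀ : x₀ ∈ Icc (-(j:ℝ)) (j:ℝ) := by
      constructor
      · have : -x₀ ≤ (j:ℝ) := le_trans (le_max_left _ _) (Nat.le_ceil _)
        linarith
      · have : (0:ℝ) ≤ j := Nat.cast_nonneg _
        linarith
    have hjx₁ : x₁ ∈ Icc (-(j:ℝ)) (j:ℝ) := by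
      constructor
      · have : (0:ℝ) ≤ j := Nat.cast_nonneg _
        linarith
      · exact le_trans (le_max_right _ _) (Nat.le_ceil _)
    have key : ∀ t : ℝ, 0 < t →
        c ≤ t⁻¹ * ⨅ h : S, ⨆ x : Set.Icc (-(j : ℝ)) (j : ℝ),
          |iteratedDeriv 0 (t • v - (h : ℝ → ℝ)) (x : ℝ)| := by
      intro t ht
      rw [le_inv_mul_iff₀ ht]
      refine le_ciInf ?_
      rintro ⟨g, hg_smooth, hg_supp⟩
      have hbdd : BddAbove (Set.range fun x : Set.Icc (-(j:ℝ)) (j:ℝ) =>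
          |iteratedDeriv 0 (t • v - g) (x:ℝ)|) := by
        simp only [iteratedDeriv_zero]
        have hcont : ContinuousOn (fun x : ℝ => |(t • v - g) x|) (Icc (-(j:ℝ)) (j:ℝ)) :=
          (((hv.continuous.const_smul t).sub hg_smooth.continuous).abs).continuousOn
        have him := (isCompact_Icc.image_of_continuousOn hcont).bddAbove
        refine him.mono ?_
        rintro y ⟨x, rfl⟩
        exact ⟨x, x.2, rfl⟩
      rcases hg_supp with hsub | hsub
      · have hg0 : g x₀ = 0 := by
          apply image_eq_zero_of_notMem_tsupport
          intro hmem
          exact absurd (hsub hmem) (not_le.2 hx₀0)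
        calc t * c ≤ t * |v x₀| := by
              exact mul_le_mul_of_nonneg_left (min_le_left _ _) ht.le
          _ = |iteratedDeriv 0 (t • v - g) x₀| := by
              simp [iteratedDeriv_zero, Pi.sub_apply, Pi.smul_apply, smul_eq_mul, hg0,
                abs_mul, abs_of_pos ht]
          _ ≤ _ := le_ciSup hbdd ⟨x₀, hjx₀⟩
      · have hg0 : g x₁ = 0 := by
          apply image_eq_zero_of_notMem_tsupport
          intro hmem
          exact absurd (hsub hmem) (not_le.2 hx₁0)
        calc t * c ≤ t * |v x₁| := by
              exact mul_le_mul_of_nonneg_left (min_le_right _ _) ht.le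
          _ = |iteratedDeriv 0 (t • v - g) x₁| := by
              simp [iteratedDeriv_zero, Pi.sub_apply, Pi.smul_apply, smul_eq_mul, hg0,
                abs_mul, abs_of_pos ht]
          _ ≤ _ := le_ciSup hbdd ⟨x₁, hjx₁⟩
    have E1 : ∀ᶠ t in 𝓝[>] (0:ℝ), (t⁻¹ * ⨅ h : S, ⨆ x : Set.Icc (-(j : ℝ)) (j : ℝ),
        |iteratedDeriv 0 (t • v - (h : ℝ → ℝ)) (x : ℝ)|) < c :=
      (H j 0).eventually_lt_const hcpos
    have E2 : ∀ᶠ t in 𝓝[>] (0:ℝ), (0:ℝ) < t :=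
      eventually_mem_nhdsWithin
    obtain ⟨t, htlt, htpos⟩ := (E1.and E2).exists
    exact absurd (key t htpos) (not_le.2 htlt)
  · intro hsupp j m
    have heq : ∀ t : ℝ, (t⁻¹ * ⨅ h : S, ⨆ x : Set.Icc (-(j : ℝ)) (j : ℝ),
        |iteratedDeriv m (t • v - (h : ℝ → ℝ)) (x : ℝ)|) = 0 := by
      intro t
      have hmem : t • v ∈ S := by
        refine ⟨hv.const_smul t, ?_⟩
        have hsub : tsupport (t • v) ⊆ tsupport v :=
          closure_mono (Function.support_const_smul_subset t v)
        rcases hsupp with h | h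
        · exact Or.inl (hsub.trans h)
        · exact Or.inr (hsub.trans h)
      have hle : (⨅ h : S, ⨆ x : Set.Icc (-(j : ℝ)) (j : ℝ),
          |iteratedDeriv m (t • v - (h : ℝ → ℝ)) (x : ℝ)|) ≤ 0 := by
        refine ciInf_le_of_le ⟨0, ?_⟩ ⟨t • v, hmem⟩ ?_
        · rintro y ⟨h, rfl⟩
          exact Real.iSup_nonneg fun x => abs_nonneg _
        · refine Real.iSup_le (fun x => ?_) le_rfl
          have : t • v - t • v = (fun _ : ℝ => (0:ℝ)) := by
            funext y; simp
          rw [this, iter_zero_fun]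
          simp
      have hge : (0:ℝ) ≤ ⨅ h : S, ⨆ x : Set.Icc (-(j : ℝ)) (j : ℝ),
          |iteratedDeriv m (t • v - (h : ℝ → ℝ)) (x : ℝ)| :=
        le_ciInf fun h => Real.iSup_nonneg fun x => abs_nonneg _
      rw [le_antisymm hle hge, mul_zero]
    simpa [heq] using tendsto_const_nhds (α := ℝ) (f := 𝓝[>] (0:ℝ)) (a := (0:ℝ))
end

section
/- Let E and F be real Banach spaces, U ⊆ E open, and φ : U → F a map of class C¹ on U. Let S ⊆ U, s ∈ S, and v ∈ E. If v is adjacent tangent to S at s, i.e. t⁻¹ · dist(s + t·v, S) → 0 as t → 0⁺, then Dφ(s)v (the Fréchet derivative of φ at s applied to v) is adjacent tangent to the image φ(S) at φ(s), i.e. t⁻¹ · dist(φ(s) + t·Dφ(s)v, φ(S)) → 0 as t → 0⁺. (This is the chart-independence of the adjacent cone under C¹ changes of coordinates.) -/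
open Filter Topology Set

set_option maxHeartbeats 1000000 in
/-- Chart-independence of the adjacent cone under `C¹` changes of coordinates: if `φ` is `C¹` on
an open set `U`, `S ⊆ U`, `s ∈ S`, and `v` is adjacent tangent to `S` at `s`, then `Dφ(s)v` is
adjacent tangent to `φ(S)` at `φ(s)`. -/
theorem stmt_5 {E F : Type*} [NormedAddCommGroup E] [NormedSpace ℝ E] [CompleteSpace E]
    [NormedAddCommGroup F] [NormedSpace ℝ F] [CompleteSpace F]
    (U : Set E) (hU : IsOpen U) (φ : E → F) (hφ : ContDiffOn ℝ 1 φ U)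
    (S : Set E) (hSU : S ⊆ U) (s : E) (hs : s ∈ S) (v : E)
    (hv : Tendsto (fun t : ℝ => t⁻¹ * Metric.infDist (s + t • v) S)
      (𝓝[>] (0 : ℝ)) (𝓝 0)) :
    Tendsto (fun t : ℝ => t⁻¹ * Metric.infDist (φ s + t • fderiv ℝ φ s v) (φ '' S))
      (𝓝[>] (0 : ℝ)) (𝓝 0) := by
  set D : E →L[ℝ] F := fderiv ℝ φ s with hD
  have hsU : s ∈ U := hSU hs
  -- differentiability at s
  have hdiff : HasFDerivAt φ D s := by
    have := (hφ.differentiableOn one_ne_zero).differentiableAt (hU.mem_nhds hsU)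
    exact this.hasFDerivAt
  -- local Lipschitz
  obtain ⟨K, V, hV, hK⟩ : ∃ K, ∃ V ∈ 𝓝 s, LipschitzOnWith K φ V :=
    (hφ.contDiffAt (hU.mem_nhds hsU)).exists_lipschitzOnWith
  obtain ⟨r, hr, hrV⟩ := Metric.mem_nhds_iff.mp hV
  -- curve t ↦ φ (s + t • v) has derivative D v at 0
  have hc : HasDerivAt (fun t : ℝ => s + t • v) v 0 := by
    simpa using (((hasDerivAt_id (0 : ℝ)).smul_const v).const_add s)
  have hcomp : HasDerivAt (fun t : ℝ => φ (s + t • v)) (D v) 0 := by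
    have : HasFDerivAt φ D (s + (0 : ℝ) • v) := by simpa using hdiff
    exact this.comp_hasDerivAt 0 hc
  -- remainder
  set rem : ℝ → F := fun t => φ (s + t • v) - φ s - t • D v with hrem
  have hlo : (fun t : ℝ => rem t) =o[𝓝 0] fun t => t := by
    have := hasDerivAt_iff_isLittleO.mp hcomp
    simpa [rem] using this
  have hremlim : Tendsto (fun t : ℝ => t⁻¹ * ‖rem t‖) (𝓝[>] (0:ℝ)) (𝓝 0) := by
    have h1 : Tendsto (fun t : ℝ => ‖rem t‖ / ‖t‖) (𝓝 0) (𝓝 0) :=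
      hlo.norm_norm.tendsto_div_nhds_zero
    have h2 := h1.mono_left (nhdsWithin_le_nhds (s := Ioi (0:ℝ)))
    refine h2.congr' ?_
    filter_upwards [self_mem_nhdsWithin] with t (ht : 0 < t)
    rw [Real.norm_eq_abs, abs_of_pos ht, div_eq_inv_mul]
  -- the bounding function
  set g : ℝ → ℝ := fun t =>
    t⁻¹ * ‖rem t‖ + ((K : ℝ) * (t⁻¹ * Metric.infDist (s + t • v) S) + (K : ℝ) * t) with hg
  have hglim : Tendsto g (𝓝[>] (0:ℝ)) (𝓝 0) := by
    have h3 : Tendsto (fun t : ℝ => (K:ℝ) * t) (𝓝[>] (0:ℝ)) (𝓝 0) := by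
      have : Tendsto (fun t : ℝ => (K:ℝ) * t) (𝓝 0) (𝓝 ((K:ℝ) * 0)) :=
        tendsto_id.const_mul _
      simpa using this.mono_left nhdsWithin_le_nhds
    have := hremlim.add ((hv.const_mul (K:ℝ)).add h3)
    simpa [g] using this
  -- squeeze
  refine squeeze_zero' ?_ ?_ hglim
  · filter_upwards [self_mem_nhdsWithin] with t (ht : 0 < t)
    exact mul_nonneg (by positivity) Metric.infDist_nonneg
  · -- choose δ
    have hv2 : (0:ℝ) < 2 * ‖v‖ + 2 := by positivity
    have hδ : (0:ℝ) < min 1 (r / (2 * ‖v‖ + 2)) :=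
      lt_min one_pos (div_pos hr hv2)
    filter_upwards [Ioo_mem_nhdsGT_of_mem ⟨le_rfl, hδ⟩] with t ⟨ht0, htδ⟩
    have ht1 : t < 1 := lt_of_lt_of_le htδ (min_le_left _ _)
    have htr : t * (2 * ‖v‖ + 2) < r := by
      rw [← lt_div_iff₀ hv2]
      exact lt_of_lt_of_le htδ (min_le_right _ _)
    -- choose y ∈ S near s + t • v
    have hSne : S.Nonempty := ⟨s, hs⟩
    obtain ⟨y, hyS, hy⟩ :=
      (Metric.infDist_lt_iff hSne (x := s + t • v)).mp
        (show Metric.infDist (s + t • v) S < Metric.infDist (s + t • v) S + t^2 by nlinarith)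
    have hinf_le : Metric.infDist (s + t • v) S ≤ t * ‖v‖ := by
      have := Metric.infDist_le_dist_of_mem (x := s + t • v) hs
      simpa [dist_eq_norm, norm_smul, abs_of_pos ht0] using this
    -- memberships in V
    have hsvV : s + t • v ∈ V := by
      apply hrV
      simp only [Metric.mem_ball, dist_eq_norm, add_sub_cancel_left, norm_smul,
        Real.norm_eq_abs, abs_of_pos ht0]
      nlinarith [norm_nonneg v]
    have hyV : y ∈ V := by
      apply hrV
      have hd1 : dist y s ≤ dist y (s + t • v) + dist (s + t • v) s := dist_triangle _ _ _
      have hd2 : dist (s + t • v) s = t * ‖v‖ := by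
        simp [dist_eq_norm, norm_smul, abs_of_pos ht0]
      rw [dist_comm] at hy
      simp only [Metric.mem_ball]
      have ht2 : t ^ 2 < t := by nlinarith
      nlinarith [norm_nonneg v]
    -- main estimate
    have hkey : Metric.infDist (φ s + t • D v) (φ '' S)
        ≤ ‖rem t‖ + (K : ℝ) * (Metric.infDist (s + t • v) S + t^2) := by
      have h1 : Metric.infDist (φ s + t • D v) (φ '' S) ≤ dist (φ s + t • D v) (φ y) :=
        Metric.infDist_le_dist_of_mem (mem_image_of_mem φ hyS)
      have h2 : dist (φ s + t • D v) (φ y)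
          ≤ dist (φ s + t • D v) (φ (s + t • v)) + dist (φ (s + t • v)) (φ y) :=
        dist_triangle _ _ _
      have h3 : dist (φ s + t • D v) (φ (s + t • v)) = ‖rem t‖ := by
        rw [dist_eq_norm, ← norm_neg]
        congr 1
        simp [rem]
        abel
      have h4 : dist (φ (s + t • v)) (φ y) ≤ (K : ℝ) * dist (s + t • v) y :=
        hK.dist_le_mul _ hsvV _ hyV
      have h5 : (K : ℝ) * dist (s + t • v) y
          ≤ (K : ℝ) * (Metric.infDist (s + t • v) S + t^2) :=
        mul_le_mul_of_nonneg_left hy.le K.coe_nonneg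
      linarith
    -- divide by t
    have htinv : (0:ℝ) < t⁻¹ := inv_pos.mpr ht0
    calc t⁻¹ * Metric.infDist (φ s + t • D v) (φ '' S)
        ≤ t⁻¹ * (‖rem t‖ + (K : ℝ) * (Metric.infDist (s + t • v) S + t^2)) :=
          mul_le_mul_of_nonneg_left hkey htinv.le
      _ = g t := by
          simp only [hg]
          have ht' : t ≠ 0 := ht0.ne'
          field_simp
end

section
/- Let E and F be real Banach spaces, U ⊆ E open, and φ : U → F a map of class C² on U. Let S ⊆ U, s ∈ S, and v, w ∈ E. If w is second-order adjacent tangent to S at s with associated direction v, i.e. t⁻² · dist(s + t·v + (t²/2)·w, S) → 0 as t → 0⁺, then D²φ(s)(v, v) + Dφ(s)w is second-order adjacent tangent to φ(S) at φ(s) with associated direction Dφ(s)v, i.e. t⁻² · dist(φ(s) + t·Dφ(s)v + (t²/2)·(D²φ(s)(v, v) + Dφ(s)w), φ(S)) → 0 as t → 0⁺. (This is the chart-independence of the second-order adjacent cone under C² changes of coordinates.) -/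
open Filter Topology Set Asymptotics

private lemma taylor_two {E F : Type*} [NormedAddCommGroup E] [NormedSpace ℝ E]
    [NormedAddCommGroup F] [NormedSpace ℝ F] {φ : E → F} {s : E}
    (hφ : ContDiffAt ℝ 2 φ s) :
    (fun k : E => φ (s + k) - φ s - fderiv ℝ φ s k
      - (2:ℝ)⁻¹ • fderiv ℝ (fderiv ℝ φ) s k k) =o[𝓝 (0:E)] fun k => ‖k‖ ^ 2 := by
  set A := fderiv ℝ φ s with hA
  set B := fderiv ℝ (fderiv ℝ φ) s with hBdef
  have hev : ∀ᶠ y in 𝓝 s, DifferentiableAt ℝ φ y := by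
    filter_upwards [hφ.eventually (by norm_num)] with y hy
    exact hy.differentiableAt (by norm_num)
  rcases Metric.eventually_nhds_iff.1 hev with ⟨δ₀, δ₀pos, hδ₀⟩
  have hB : HasFDerivAt (fderiv ℝ φ) B s :=
    ((hφ.fderiv_right (m := 1) (by norm_num)).differentiableAt (by norm_num)).hasFDerivAt
  have hsymm : ∀ a b : E, B a b = B b a := hφ.isSymmSndFDerivAt (by simp [minSmoothness_of_isRCLikeNormedField])
  have hq : ∀ u : E, HasFDerivAt (fun y : E => B y y) (B u + B.flip u) u := by
    intro u
    have hpr : HasFDerivAt (fun y : E => (y, y))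
        ((ContinuousLinearMap.id ℝ E).prod (ContinuousLinearMap.id ℝ E)) u :=
      HasFDerivAt.prodMk (hasFDerivAt_id u) (hasFDerivAt_id u)
    have hb2 : HasFDerivAt (fun p : E × E => B p.1 p.2)
        (B.isBoundedBilinearMap.deriv (u, u)) ((fun y : E => (y, y)) u) :=
      B.isBoundedBilinearMap.hasFDerivAt (u, u)
    have h1 := HasFDerivAt.comp (f := fun y : E => (y, y)) u hb2 hpr
    exact h1.congr_fderiv (by ext k; simp)
  have hg : ∀ u : E, dist u 0 < δ₀ → HasFDerivAt
      (fun k : E => φ (s + k) - φ s - A k - (2:ℝ)⁻¹ • B k k)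
      ((fderiv ℝ φ (s + u) - A) - B u) u := by
    intro u hu
    have hdu : DifferentiableAt ℝ φ (s + u) := hδ₀ (by
      simpa [dist_eq_norm] using hu)
    have h1 : HasFDerivAt (fun k : E => φ (s + k)) (fderiv ℝ φ (s + u)) u := by
      have := (hdu.hasFDerivAt).comp u ((hasFDerivAt_id u).const_add s)
      exact this.congr_fderiv (by ext k; simp)
    have h2 := ((h1.sub_const (φ s)).sub (A.hasFDerivAt)).sub ((hq u).const_smul ((2:ℝ)⁻¹))
    refine h2.congr_fderiv ?_
    ext k
    simp only [ContinuousLinearMap.coe_sub', Pi.sub_apply, ContinuousLinearMap.coe_smul',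
      Pi.smul_apply, ContinuousLinearMap.add_apply, ContinuousLinearMap.flip_apply]
    rw [hsymm k u, ← two_smul ℝ (B u k), smul_smul]
    norm_num
  rw [isLittleO_iff]
  intro ε εpos
  have hlo := (hasFDerivAt_iff_isLittleO_nhds_zero.1 hB)
  rcases Metric.eventually_nhds_iff.1 (isLittleO_iff.1 hlo εpos) with ⟨δ₁, δ₁pos, hδ₁⟩
  filter_upwards [Metric.ball_mem_nhds (0:E) (lt_min δ₀pos δ₁pos)] with k hk
  rw [Metric.mem_ball] at hk
  set g : E → F := fun k : E => φ (s + k) - φ s - A k - (2:ℝ)⁻¹ • B k k with hgdef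
  have hballδ : ∀ u : E, u ∈ Metric.closedBall (0:E) ‖k‖ → dist u 0 < min δ₀ δ₁ := by
    intro u hu
    rw [Metric.mem_closedBall] at hu
    calc dist u 0 ≤ ‖k‖ := hu
      _ = dist k 0 := by rw [dist_zero_right]
      _ < min δ₀ δ₁ := hk
  have hder : ∀ u ∈ Metric.closedBall (0:E) ‖k‖,
      HasFDerivWithinAt g ((fderiv ℝ φ (s + u) - A) - B u) (Metric.closedBall (0:E) ‖k‖) u :=
    fun u hu => (hg u ((hballδ u hu).trans_le (min_le_left _ _))).hasFDerivWithinAt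
  have hbound : ∀ u ∈ Metric.closedBall (0:E) ‖k‖,
      ‖(fderiv ℝ φ (s + u) - A) - B u‖ ≤ ε * ‖k‖ := by
    intro u hu
    have h1 : ‖fderiv ℝ φ (s + u) - fderiv ℝ φ s - B u‖ ≤ ε * ‖u‖ :=
      hδ₁ ((hballδ u hu).trans_le (min_le_right _ _))
    calc ‖(fderiv ℝ φ (s + u) - A) - B u‖ = ‖fderiv ℝ φ (s + u) - fderiv ℝ φ s - B u‖ := by
          rw [hA, sub_sub]
      _ ≤ ε * ‖u‖ := h1
      _ ≤ ε * ‖k‖ := by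
          have := Metric.mem_closedBall.1 hu
          rw [dist_zero_right] at this
          exact mul_le_mul_of_nonneg_left this εpos.le
  have hmvt := (convex_closedBall (0:E) ‖k‖).norm_image_sub_le_of_norm_hasFDerivWithin_le
    hder hbound (Metric.mem_closedBall_self (norm_nonneg k))
    (by rw [Metric.mem_closedBall, dist_zero_right])
  have hg0 : g 0 = 0 := by simp [hgdef]
  rw [hg0, sub_zero, sub_zero] at hmvt
  calc ‖g k‖ ≤ ε * ‖k‖ * ‖k‖ := hmvt
    _ = ε * ‖‖k‖ ^ 2‖ := by
        rw [Real.norm_of_nonneg (by positivity)]; ring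
/-- Chart-independence of the second-order adjacent cone under `C²` changes of coordinates: if
`φ` is `C²` on an open set `U`, `S ⊆ U`, `s ∈ S`, and `w` is second-order adjacent tangent to `S`
at `s` with associated direction `v`, then `D²φ(s)(v,v) + Dφ(s)w` is second-order adjacent
tangent to `φ(S)` at `φ(s)` with associated direction `Dφ(s)v`. -/
theorem stmt_6 {E F : Type*} [NormedAddCommGroup E] [NormedSpace ℝ E] [CompleteSpace E]
    [NormedAddCommGroup F] [NormedSpace ℝ F] [CompleteSpace F]
    (U : Set E) (hU : IsOpen U) (φ : E → F) (hφ : ContDiffOn ℝ 2 φ U)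
    (S : Set E) (hSU : S ⊆ U) (s : E) (hs : s ∈ S) (v w : E)
    (hw : Tendsto
      (fun t : ℝ => (t ^ 2)⁻¹ * Metric.infDist (s + t • v + (t ^ 2 / 2) • w) S)
      (𝓝[>] (0 : ℝ)) (𝓝 0)) :
    Tendsto
      (fun t : ℝ => (t ^ 2)⁻¹ * Metric.infDist
        (φ s + t • fderiv ℝ φ s v +
          (t ^ 2 / 2) • (iteratedFDeriv ℝ 2 φ s ![v, v] + fderiv ℝ φ s w))
        (φ '' S))
      (𝓝[>] (0 : ℝ)) (𝓝 0) := by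
  classical
  have hφs : ContDiffAt ℝ 2 φ s := (hφ.contDiffAt (hU.mem_nhds (hSU hs)))
  set A := fderiv ℝ φ s with hA
  set B := fderiv ℝ (fderiv ℝ φ) s with hBdef
  have hiter : iteratedFDeriv ℝ 2 φ s ![v, v] = B v v := by
    rw [iteratedFDeriv_two_apply]
    simp [hBdef]
  rw [hiter]
  set l := 𝓝[>] (0:ℝ) with hl
  have htend0 : Tendsto (fun t : ℝ => t) l (𝓝 0) := tendsto_id.mono_left nhdsWithin_le_nhds
  have ht_o1 : (fun t : ℝ => t) =o[l] (fun _ => (1:ℝ)) := (isLittleO_one_iff ℝ).2 htend0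
  set c : ℝ → E := fun t => s + t • v + (t ^ 2 / 2) • w with hc
  have hSne : S.Nonempty := ⟨s, hs⟩
  have hex : ∀ t : ℝ, 0 < t → ∃ y ∈ S, dist (c t) y < Metric.infDist (c t) S + t ^ 3 :=
    fun t ht => (Metric.infDist_lt_iff hSne).1 (lt_add_of_pos_right _ (by positivity))
  choose! x hxS hxd using hex
  set r : ℝ → E := fun t => x t - c t with hr
  -- infDist along the curve is o(t^2)
  have hid : (fun t => Metric.infDist (c t) S) =o[l] fun t => t ^ 2 := by
    rw [isLittleO_iff_tendsto']
    · have : (fun t : ℝ => Metric.infDist (c t) S / t ^ 2)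
          = fun t => (t ^ 2)⁻¹ * Metric.infDist (c t) S := by
        funext t; rw [div_eq_inv_mul]
      rw [this]; exact hw
    · filter_upwards [self_mem_nhdsWithin] with t ht h
      exact absurd h (by simp only [mem_Ioi] at ht; positivity)
  have ht3 : (fun t : ℝ => t ^ 3) =o[l] fun t => t ^ 2 := by
    have := ht_o1.mul_isBigO (isBigO_refl (fun t : ℝ => t ^ 2) l)
    simpa [one_mul, pow_succ, pow_two, mul_comm, mul_assoc, mul_left_comm] using this
  have hrO : r =o[l] fun t => t ^ 2 := by
    have hb : r =O[l] fun t => Metric.infDist (c t) S + t ^ 3 := by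
      rw [isBigO_iff]
      refine ⟨1, ?_⟩
      filter_upwards [self_mem_nhdsWithin] with t ht
      have h1 : ‖r t‖ ≤ Metric.infDist (c t) S + t ^ 3 := by
        have := (hxd t ht).le
        rw [dist_eq_norm'] at this
        simpa [hr] using this
      calc ‖r t‖ ≤ Metric.infDist (c t) S + t ^ 3 := h1
        _ ≤ 1 * ‖Metric.infDist (c t) S + t ^ 3‖ := by rw [one_mul]; exact le_abs_self _
    exact hb.trans_isLittleO (hid.add ht3)
  set e : ℝ → E := fun t => (t ^ 2 / 2) • w + r t with he
  set h : ℝ → E := fun t => t • v + e t with hh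
  have hx_eq : ∀ t, x t = s + h t := by
    intro t; simp only [hh, he, hr, hc]; abel
  have heO : e =O[l] fun t => t ^ 2 := by
    have h1 : (fun t : ℝ => (t ^ 2 / 2) • w) =O[l] fun t => t ^ 2 := by
      rw [isBigO_iff]
      refine ⟨‖w‖, Eventually.of_forall fun t => ?_⟩
      rw [norm_smul, Real.norm_eq_abs, Real.norm_eq_abs, abs_of_nonneg (by positivity : (0:ℝ) ≤ t ^ 2 / 2), abs_of_nonneg (by positivity : (0:ℝ) ≤ t ^ 2)]
      nlinarith [norm_nonneg w, sq_nonneg t]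
    exact h1.add hrO.isBigO
  have ht2O : (fun t : ℝ => t ^ 2) =O[l] fun t => t := by
    have := ht_o1.mul_isBigO (isBigO_refl (fun t : ℝ => t) l)
    have h2 := this.isBigO
    simpa [one_mul, pow_two] using h2
  have hhO : h =O[l] fun t => t := by
    have h1 : (fun t : ℝ => t • v) =O[l] fun t => t := by
      rw [isBigO_iff]
      exact ⟨‖v‖, Eventually.of_forall fun t => le_of_eq (by rw [norm_smul, mul_comm])⟩
    exact h1.add ((heO.trans ht2O))
  have hh0 : Tendsto h l (𝓝 0) := hhO.trans_tendsto htend0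
  -- Taylor remainder composed with h
  have hρ : (fun t => φ (s + h t) - φ s - A (h t) - (2:ℝ)⁻¹ • B (h t) (h t)) =o[l]
      fun t => t ^ 2 := by
    have h1 := (taylor_two hφs).comp_tendsto hh0
    refine h1.trans_isBigO ?_
    have := (hhO.norm_left.mul hhO.norm_left)
    simpa [pow_two, Function.comp_def] using this
  -- linear term in r
  have hAr : (fun t => A (r t)) =o[l] fun t => t ^ 2 :=
    (A.isBigO_comp r l).trans_isLittleO hrO
  -- bilinear term
  have hBil : (fun t => B (h t) (h t) - (t ^ 2) • B v v) =o[l] fun t => t ^ 2 := by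
    have key : ∀ t, B (h t) (h t) - (t ^ 2) • B v v
        = t • B v (e t) + t • B (e t) v + B (e t) (e t) := by
      intro t
      simp only [hh, map_add, map_smul, ContinuousLinearMap.add_apply,
        ContinuousLinearMap.smul_apply, smul_add, smul_smul, pow_two]
      abel
    have T1 : (fun t => t • B v (e t)) =o[l] fun t => t ^ 2 := by
      have hin : (fun t => B v (e t)) =O[l] fun t => t ^ 2 := ((B v).isBigO_comp e l).trans heO
      have := ht_o1.smul_isBigO hin
      refine this.trans_isBigO ?_
      simpa [one_mul] using (isBigO_refl (fun t : ℝ => t ^ 2) l)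
    have T2 : (fun t => t • B (e t) v) =o[l] fun t => t ^ 2 := by
      have hin : (fun t => B (e t) v) =O[l] fun t => t ^ 2 := by
        have h0 : (fun t => (B.flip v) (e t)) =O[l] e := (B.flip v).isBigO_comp e l
        simpa [ContinuousLinearMap.flip_apply] using h0.trans heO
      have := ht_o1.smul_isBigO hin
      refine this.trans_isBigO ?_
      simpa [one_mul] using (isBigO_refl (fun t : ℝ => t ^ 2) l)
    have T3 : (fun t => B (e t) (e t)) =o[l] fun t => t ^ 2 := by
      have h1 : (fun t => B (e t) (e t)) =O[l] fun t => ‖e t‖ * ‖e t‖ := by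
        rw [isBigO_iff]
        refine ⟨‖B‖, Eventually.of_forall fun t => ?_⟩
        calc ‖B (e t) (e t)‖ ≤ ‖B‖ * ‖e t‖ * ‖e t‖ := B.le_opNorm₂ _ _
          _ = ‖B‖ * ‖‖e t‖ * ‖e t‖‖ := by
              rw [Real.norm_of_nonneg (by positivity), mul_assoc]
      have h2 : (fun t => ‖e t‖ * ‖e t‖) =O[l] fun t => t ^ 2 * t ^ 2 :=
        heO.norm_left.mul heO.norm_left
      have h3 : (fun t : ℝ => t ^ 2 * t ^ 2) =o[l] fun t => t ^ 2 := by
        have h4 : (fun t : ℝ => t ^ 2) =o[l] (fun _ => (1:ℝ)) :=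
          (isLittleO_one_iff ℝ).2 (by simpa using (htend0.pow 2))
        have := h4.mul_isBigO (isBigO_refl (fun t : ℝ => t ^ 2) l)
        simpa [one_mul] using this
      exact (h1.trans h2).trans_isLittleO h3
    have hsum := (T1.add T2).add T3
    exact hsum.congr' (Eventually.of_forall fun t => (key t).symm) (Eventually.of_forall fun t => rfl)
  -- the total error
  set Δ : ℝ → F := fun t => (φ s + t • A v + (t ^ 2 / 2) • (B v v + A w)) - φ (x t) with hΔdef
  have hΔeq : ∀ t, Δ t = -(A (r t)) - (2:ℝ)⁻¹ • (B (h t) (h t) - (t ^ 2) • B v v)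
      - (φ (s + h t) - φ s - A (h t) - (2:ℝ)⁻¹ • B (h t) (h t)) := by
    intro t
    have hAh : A (h t) = t • A v + ((t ^ 2 / 2) • A w + A (r t)) := by
      simp [hh, he, map_add, map_smul]
    simp only [hΔdef, hx_eq t, hAh, smul_add, smul_sub, smul_smul]
    module
  have hΔ : Δ =o[l] fun t => t ^ 2 := by
    have hsum := ((hAr.neg_left).sub (hBil.const_smul_left ((2:ℝ)⁻¹))).sub hρ
    exact hsum.congr' (Eventually.of_forall fun t => (hΔeq t).symm) (Eventually.of_forall fun t => rfl)
  have hdiv : Tendsto (fun t => ‖Δ t‖ / t ^ 2) l (𝓝 0) :=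
    hΔ.norm_left.tendsto_div_nhds_zero
  refine squeeze_zero' ?_ ?_ hdiv
  · filter_upwards [self_mem_nhdsWithin] with t ht
    exact mul_nonneg (by positivity) Metric.infDist_nonneg
  · filter_upwards [self_mem_nhdsWithin] with t ht
    simp only [mem_Ioi] at ht
    have hmem : φ (x t) ∈ φ '' S := ⟨x t, hxS t ht, rfl⟩
    have hle : Metric.infDist (φ s + t • A v + (t ^ 2 / 2) • (B v v + A w)) (φ '' S) ≤ ‖Δ t‖ := by
      have := Metric.infDist_le_dist_of_mem (x := φ s + t • A v + (t ^ 2 / 2) • (B v v + A w)) hmem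
      rwa [dist_eq_norm] at this
    calc (t ^ 2)⁻¹ * Metric.infDist (φ s + t • A v + (t ^ 2 / 2) • (B v v + A w)) (φ '' S)
        ≤ (t ^ 2)⁻¹ * ‖Δ t‖ := mul_le_mul_of_nonneg_left hle (by positivity)
      _ = ‖Δ t‖ / t ^ 2 := (div_eq_inv_mul _ _).symm
end

section
/- Let E be a real Banach space, F₁ ⊆ E a closed linear subspace, s ∈ F₁, and f, e ∈ E. Then e is second-order adjacent tangent to F₁ at s with associated direction f (i.e. t⁻² · dist(s + t·f + (t²/2)·e, F₁) → 0 as t → 0⁺) if and only if f ∈ F₁ and e ∈ F₁. (This is the linear-chart form of the lemma identifying second-order adjacent tangent vectors of a C² submanifold with tangent vectors of its tangent bundle.) -/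
open Filter Topology Set

/-- For a closed linear subspace `F₁` of a real Banach space `E` and `s ∈ F₁`, a vector `e` is
second-order adjacent tangent to `F₁` at `s` with associated direction `f` if and only if
`f ∈ F₁` and `e ∈ F₁`. -/
theorem stmt_8 {E : Type*} [NormedAddCommGroup E] [NormedSpace ℝ E] [CompleteSpace E]
    (F₁ : Submodule ℝ E) (hF₁ : IsClosed (F₁ : Set E)) (s : E) (hs : s ∈ F₁) (f e : E) :
    Tendsto
      (fun t : ℝ => (t ^ 2)⁻¹ * Metric.infDist (s + t • f + (t ^ 2 / 2) • e) (F₁ : Set E))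
      (𝓝[>] (0 : ℝ)) (𝓝 0) ↔ f ∈ F₁ ∧ e ∈ F₁ := by
  have key : ∀ x : E, Metric.infDist x (F₁ : Set E) =
      ‖(Submodule.Quotient.mk x : E ⧸ F₁)‖ := fun x =>
    (QuotientAddGroup.norm_mk (S := F₁.toAddSubgroup) x).symm
  constructor
  · intro h
    -- rewrite the function using the quotient norm
    have hrw : ∀ t : ℝ,
        Metric.infDist (s + t • f + (t ^ 2 / 2) • e) (F₁ : Set E)
          = ‖t • (Submodule.Quotient.mk f : E ⧸ F₁)
              + (t ^ 2 / 2) • (Submodule.Quotient.mk e : E ⧸ F₁)‖ := by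
      intro t
      rw [key]
      congr 1
      have hsz : (Submodule.Quotient.mk s : E ⧸ F₁) = 0 :=
        (Submodule.Quotient.mk_eq_zero _).2 hs
      simp [Submodule.Quotient.mk_add, Submodule.Quotient.mk_smul, hsz]
    set F : E ⧸ F₁ := Submodule.Quotient.mk f
    set G : E ⧸ F₁ := Submodule.Quotient.mk e
    have h' : Tendsto (fun t : ℝ => (t ^ 2)⁻¹ * ‖t • F + (t ^ 2 / 2) • G‖)
        (𝓝[>] (0 : ℝ)) (𝓝 0) := by
      simpa only [hrw] using h
    -- first, F = 0
    have hF : F = 0 := by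
      have hbound : ∀ᶠ t : ℝ in 𝓝[>] (0 : ℝ),
          ‖F‖ ≤ t * ((t ^ 2)⁻¹ * ‖t • F + (t ^ 2 / 2) • G‖) + t / 2 * ‖G‖ := by
        filter_upwards [self_mem_nhdsWithin] with t (ht : 0 < t)
        have h1 : t * ‖F‖ = ‖t • F‖ := by
          rw [norm_smul, Real.norm_eq_abs, abs_of_pos ht]
        have h2 : ‖t • F‖ ≤ ‖t • F + (t ^ 2 / 2) • G‖ + ‖(t ^ 2 / 2) • G‖ := by
          have := norm_sub_le (t • F + (t ^ 2 / 2) • G) ((t ^ 2 / 2) • G)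
          rwa [add_sub_cancel_right] at this
        have h3 : ‖(t ^ 2 / 2) • G‖ = t ^ 2 / 2 * ‖G‖ := by
          rw [norm_smul, Real.norm_eq_abs, abs_of_pos (by positivity)]
        have ht2 : (0 : ℝ) < t ^ 2 := by positivity
        have : t * ‖F‖ ≤ ‖t • F + (t ^ 2 / 2) • G‖ + t ^ 2 / 2 * ‖G‖ := by
          rw [h1]; rw [h3] at h2; exact h2
        calc ‖F‖ = (t * ‖F‖) / t := by field_simp
          _ ≤ (‖t • F + (t ^ 2 / 2) • G‖ + t ^ 2 / 2 * ‖G‖) / t := by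
              gcongr
          _ = t * ((t ^ 2)⁻¹ * ‖t • F + (t ^ 2 / 2) • G‖) + t / 2 * ‖G‖ := by
              field_simp
      have hlim : Tendsto
          (fun t : ℝ => t * ((t ^ 2)⁻¹ * ‖t • F + (t ^ 2 / 2) • G‖) + t / 2 * ‖G‖)
          (𝓝[>] (0 : ℝ)) (𝓝 0) := by
        have l1 : Tendsto (fun t : ℝ => t) (𝓝[>] (0 : ℝ)) (𝓝 0) :=
          tendsto_id.mono_left nhdsWithin_le_nhds
        have := (l1.mul h').add ((l1.div_const 2).mul (tendsto_const_nhds (x := ‖G‖)))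
        simpa using this
      have : ‖F‖ ≤ 0 := ge_of_tendsto hlim hbound
      exact norm_le_zero_iff.mp this
    rw [hF] at h'
    -- now the function is constantly ‖G‖/2
    have heq : ∀ᶠ t : ℝ in 𝓝[>] (0 : ℝ),
        (t ^ 2)⁻¹ * ‖t • (0 : E ⧸ F₁) + (t ^ 2 / 2) • G‖ = ‖G‖ / 2 := by
      filter_upwards [self_mem_nhdsWithin] with t (ht : 0 < t)
      have : ‖(t ^ 2 / 2) • G‖ = t ^ 2 / 2 * ‖G‖ := by
        rw [norm_smul, Real.norm_eq_abs, abs_of_pos (by positivity)]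
      rw [smul_zero, zero_add, this]
      field_simp
    have hG : ‖G‖ / 2 = 0 := by
      have hconst : Tendsto (fun _ : ℝ => ‖G‖ / 2) (𝓝[>] (0 : ℝ)) (𝓝 0) :=
        h'.congr' heq
      exact tendsto_nhds_unique tendsto_const_nhds hconst
    have hGz : G = 0 := norm_eq_zero.mp (by linarith)
    exact ⟨(Submodule.Quotient.mk_eq_zero _).1 hF,
      (Submodule.Quotient.mk_eq_zero _).1 hGz⟩
  · rintro ⟨hf, he⟩
    have hmem : ∀ t : ℝ, s + t • f + (t ^ 2 / 2) • e ∈ F₁ := fun t =>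
      F₁.add_mem (F₁.add_mem hs (F₁.smul_mem _ hf)) (F₁.smul_mem _ he)
    have : ∀ t : ℝ,
        (t ^ 2)⁻¹ * Metric.infDist (s + t • f + (t ^ 2 / 2) • e) (F₁ : Set E) = 0 := by
      intro t
      rw [Metric.infDist_zero_of_mem (hmem t), mul_zero]
    simp only [this]
    exact tendsto_const_nhds
end

section
/- Let S₂ : E × E → E be continuously differentiable (C¹) and let F₁ ⊆ E be a closed linear subspace. Then the following are equivalent: (a) S₂(x, v) ∈ F₁ for all x, v ∈ F₁; (b) every geodesic g : I → E of S₂ (I an open interval containing 0) with g(0) ∈ F₁ and g'(0) ∈ F₁ satisfies g(t) ∈ F₁ for all t ∈ I. (This is the linear-chart form of the theorem that a closed submanifold is totally geodesic if and only if its admissible set equals its tangent bundle F₁ × F₁.) -/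
open Filter Topology Set

/-- If a function maps an open set into a closed submodule, its derivative at points of the
set also lies in the submodule. -/
theorem aux_deriv_mem {E : Type*} [NormedAddCommGroup E] [NormedSpace ℝ E]
    (F₁ : Submodule ℝ E) (hF₁ : IsClosed (F₁ : Set E)) {h : ℝ → E} {s : Set ℝ}
    (hs : IsOpen s) {t : ℝ} (ht : t ∈ s) {d : E} (hd : HasDerivAt h d t)
    (hmem : ∀ x ∈ s, h x ∈ F₁) : d ∈ F₁ := by
  have htend := hasDerivAt_iff_tendsto_slope.1 hd
  have hev : ∀ᶠ y in 𝓝[≠] t, slope h t y ∈ (F₁ : Set E) := by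
    filter_upwards [mem_nhdsWithin_of_mem_nhds (hs.mem_nhds ht)] with y hy
    exact F₁.smul_mem _ (F₁.sub_mem (hmem y hy) (hmem t ht))
  have : d ∈ closure (F₁ : Set E) := mem_closure_of_tendsto htend hev
  rwa [hF₁.closure_eq] at this

/-- Grönwall: a function whose derivative is linearly controlled by its norm and which
vanishes at the left endpoint vanishes identically. -/
theorem aux_gronwall_zero {Q : Type*} [NormedAddCommGroup Q] [NormedSpace ℝ Q]
    {w w' : ℝ → Q} {a b K : ℝ}
    (hd : ∀ t ∈ Icc a b, HasDerivAt w (w' t) t)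
    (hb : ∀ t ∈ Icc a b, ‖w' t‖ ≤ K * ‖w t‖)
    (h0 : w a = 0) : ∀ t ∈ Icc a b, w t = 0 := by
  have hcont : ContinuousOn w (Icc a b) :=
    fun t ht => ((hd t ht).continuousAt).continuousWithinAt
  have key := norm_le_gronwallBound_of_norm_deriv_right_le hcont
      (fun t ht => (hd t (Ico_subset_Icc_self ht)).hasDerivWithinAt)
      (δ := 0) (by rw [h0, norm_zero])
      (ε := 0) (fun t ht => by simpa using hb t (Ico_subset_Icc_self ht))
  intro t ht
  have h2 := key t ht
  rw [gronwallBound_ε0_δ0] at h2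
  exact norm_le_zero_iff.1 h2

/-- Linear-chart form of the totally geodesic criterion: for a `C¹` spray second component `S₂`
and a closed linear subspace `F₁ ⊆ E`, `S₂` maps `F₁ × F₁` into `F₁` if and only if every
geodesic of `S₂` starting in `F₁` with initial velocity in `F₁` remains in `F₁`. -/
theorem stmt_10 {E : Type*} [NormedAddCommGroup E] [NormedSpace ℝ E] [CompleteSpace E]
    (S₂ : E × E → E) (hS₂ : ContDiff ℝ 1 S₂)
    (F₁ : Submodule ℝ E) (hF₁ : IsClosed (F₁ : Set E)) :
    (∀ x ∈ F₁, ∀ v ∈ F₁, S₂ (x, v) ∈ F₁) ↔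
      (∀ (g : ℝ → E) (I : Set ℝ), IsOpen I → I.OrdConnected → (0 : ℝ) ∈ I →
        ContDiffOn ℝ 2 g I →
        (∀ t ∈ I, deriv (deriv g) t = S₂ (g t, deriv g t)) →
        g 0 ∈ F₁ → deriv g 0 ∈ F₁ → ∀ t ∈ I, g t ∈ F₁) := by
  have hV : ContDiff ℝ 1 (fun p : E × E => (p.2, S₂ p)) := contDiff_snd.prodMk hS₂
  set V : E × E → E × E := fun p => (p.2, S₂ p) with hVdef
  constructor
  · -- (a) → (b)
    intro ha g I hIopen hIord h0I hg hgeo hg0 hg0'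
    set F : Submodule ℝ (E × E) := F₁.prod F₁ with hFdef
    have hFclosed : IsClosed (F : Set (E × E)) := by
      have : (F : Set (E × E)) = (F₁ : Set E) ×ˢ (F₁ : Set E) := rfl
      rw [this]; exact hF₁.prod hF₁
    haveI : IsClosed (F : Set (E × E)) := hFclosed
    have hVF : ∀ p ∈ F, V p ∈ F := by
      intro p hp
      exact Submodule.mem_prod.2 ⟨(Submodule.mem_prod.1 hp).2,
        ha p.1 (Submodule.mem_prod.1 hp).1 p.2 (Submodule.mem_prod.1 hp).2⟩
    set u : ℝ → E × E := fun t => (g t, deriv g t) with hudef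
    -- derivative facts
    have hgd : ∀ t ∈ I, HasDerivAt g (deriv g t) t := fun t ht =>
      ((hg.differentiableOn (by norm_num)).differentiableAt (hIopen.mem_nhds ht)).hasDerivAt
    have hdg1 : ContDiffOn ℝ 1 (deriv g) I := by
      have h2 : ContDiffOn ℝ ((1 : ℕ) + 1) g I := by exact_mod_cast hg
      exact ((contDiffOn_succ_iff_deriv_of_isOpen hIopen).1 h2).2.2
    have hgdd : ∀ t ∈ I, HasDerivAt (deriv g) (deriv (deriv g) t) t := fun t ht =>
      ((hdg1.differentiableOn one_ne_zero).differentiableAt (hIopen.mem_nhds ht)).hasDerivAt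
    have hu : ∀ t ∈ I, HasDerivAt u (V (u t)) t := by
      intro t ht
      have h := (hgd t ht).prodMk (hgdd t ht)
      rw [hgeo t ht] at h
      exact h
    -- the quotient map
    let q : (E × E) →L[ℝ] ((E × E) ⧸ F) := F.mkQ.mkContinuous 1 (fun m => by
      simpa [one_mul] using Submodule.Quotient.norm_mk_le F m)
    have hq : ∀ m : E × E, q m = Submodule.Quotient.mk m := fun m => rfl
    set w : ℝ → (E × E) ⧸ F := fun t => q (u t) with hwdef
    have hw : ∀ t ∈ I, HasDerivAt w (q (V (u t))) t := fun t ht =>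
      (q.hasFDerivAt.comp_hasDerivAt t (hu t ht))
    have hw_zero : ∀ t, (w t = 0 ↔ u t ∈ F) := by
      intro t; rw [hwdef]; simp only [hq]; exact Submodule.Quotient.mk_eq_zero F
    -- key local invariance
    have key : ∀ t₀ ∈ I, u t₀ ∈ F → ∃ ε > (0:ℝ), Icc (t₀ - ε) (t₀ + ε) ⊆ I ∧
        ∀ t ∈ Icc (t₀ - ε) (t₀ + ε), u t ∈ F := by
      intro t₀ ht₀ hut₀
      obtain ⟨K, s, hs, hlip⟩ := (hV.contDiffAt (x := u t₀)).exists_lipschitzOnWith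
      obtain ⟨r, hr, hball⟩ := Metric.mem_nhds_iff.1 hs
      have hlipb : LipschitzOnWith K V (Metric.ball (u t₀) r) := hlip.mono hball
      have hucont : ContinuousAt u t₀ := (hu t₀ ht₀).continuousAt
      have hN : I ∩ u ⁻¹' (Metric.ball (u t₀) (r/4)) ∈ 𝓝 t₀ :=
        inter_mem (hIopen.mem_nhds ht₀)
          (hucont (Metric.ball_mem_nhds _ (by positivity)))
      obtain ⟨ε, hε, hsub⟩ := Metric.nhds_basis_closedBall.mem_iff.1 hN
      rw [Real.closedBall_eq_Icc] at hsub
      have hIccI : Icc (t₀ - ε) (t₀ + ε) ⊆ I := fun t ht => (hsub ht).1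
      have hIccB : ∀ t ∈ Icc (t₀ - ε) (t₀ + ε), ‖u t - u t₀‖ < r / 4 := by
        intro t ht
        have := (hsub ht).2
        simpa [Metric.mem_ball, dist_eq_norm] using this
      have hwt0 : w t₀ = 0 := (hw_zero t₀).2 hut₀
      -- the differential inequality
      have hbound : ∀ t ∈ Icc (t₀ - ε) (t₀ + ε),
          ‖q (V (u t))‖ ≤ (2 * K) * ‖w t‖ := by
        intro t ht
        rcases eq_or_ne (w t) 0 with h0 | h0
        · have hutF : u t ∈ F := (hw_zero t).1 h0
          have hV0 : q (V (u t)) = 0 := by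
            rw [hq]; exact (Submodule.Quotient.mk_eq_zero F).2 (hVF _ hutF)
          rw [hV0, h0]
          simp
        · have hwpos : (0:ℝ) < ‖w t‖ := norm_pos_iff.2 h0
          obtain ⟨m, hm, hmlt⟩ := Submodule.Quotient.norm_mk_lt (w t) hwpos
          -- m represents w t, ‖m‖ < 2 ‖w t‖
          set y : E × E := u t - m with hydef
          have hyF : y ∈ F := by
            apply (Submodule.Quotient.mk_eq_zero F).1
            calc (Submodule.Quotient.mk y : (E × E) ⧸ F) = q y := (hq y).symm
              _ = q (u t) - q m := by rw [hydef, map_sub]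
              _ = w t - w t := by rw [hq m, hm]
              _ = 0 := sub_self _
          have hwle : ‖w t‖ < r / 4 := by
            have h1 : w t = q (u t - u t₀) := by
              rw [map_sub, show q (u t₀) = (0 : (E × E) ⧸ F) from hwt0, sub_zero]
            rw [h1, hq]
            calc ‖(Submodule.Quotient.mk (u t - u t₀) : (E × E) ⧸ F)‖
                ≤ ‖u t - u t₀‖ := Submodule.Quotient.norm_mk_le F _
              _ < r / 4 := hIccB t ht
          have hyclose : ‖u t - y‖ < 2 * ‖w t‖ := by
            rw [hydef]; simpa [two_mul] using hmlt
          have hyball : y ∈ Metric.ball (u t₀) r := by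
            rw [Metric.mem_ball, dist_eq_norm]
            calc ‖y - u t₀‖ ≤ ‖y - u t‖ + ‖u t - u t₀‖ := norm_sub_le_norm_sub_add_norm_sub _ _ _
              _ < 2 * ‖w t‖ + r / 4 := by
                  rw [norm_sub_rev]
                  exact add_lt_add (hyclose) (hIccB t ht)
              _ ≤ 2 * (r / 4) + r / 4 := by nlinarith [hwle]
              _ < r := by linarith
          have hutball : u t ∈ Metric.ball (u t₀) r := by
            rw [Metric.mem_ball, dist_eq_norm]
            linarith [hIccB t ht, hr]
          have hVy : q (V y) = 0 := by
            rw [hq]; exact (Submodule.Quotient.mk_eq_zero F).2 (hVF _ hyF)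
          calc ‖q (V (u t))‖ = ‖q (V (u t)) - q (V y)‖ := by rw [hVy, sub_zero]
            _ = ‖q (V (u t) - V y)‖ := by rw [map_sub]
            _ ≤ ‖V (u t) - V y‖ := by
                rw [hq]; exact Submodule.Quotient.norm_mk_le F _
            _ ≤ K * ‖u t - y‖ := by
                have := hlipb.dist_le_mul (u t) hutball y hyball
                rwa [dist_eq_norm, dist_eq_norm] at this
            _ ≤ K * (2 * ‖w t‖) := by
                exact mul_le_mul_of_nonneg_left hyclose.le K.coe_nonneg
            _ = (2 * K) * ‖w t‖ := by ring
      refine ⟨ε, hε, hIccI, ?_⟩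
      -- forward
      have hfwd : ∀ t ∈ Icc t₀ (t₀ + ε), w t = 0 :=
        aux_gronwall_zero (w' := fun t => q (V (u t))) (K := 2 * K)
          (fun t ht => hw t (hIccI ⟨by linarith [ht.1], ht.2⟩))
          (fun t ht => hbound t ⟨by linarith [ht.1], ht.2⟩) hwt0
      -- backward, via reflection
      have hbwd : ∀ t ∈ Icc (t₀ - ε) t₀, w t = 0 := by
        have refl_deriv : ∀ s ∈ Icc t₀ (t₀ + ε),
            HasDerivAt (fun s => w (2 * t₀ - s))
              ((-1 : ℝ) • q (V (u (2 * t₀ - s)))) s := by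
          intro s hs
          have hmem : 2 * t₀ - s ∈ Icc (t₀ - ε) (t₀ + ε) := by
            constructor <;> [linarith [hs.2]; linarith [hs.1, hε]]
          have hinner : HasDerivAt (fun s : ℝ => 2 * t₀ - s) (-1) s := by
            simpa using (hasDerivAt_id s).const_sub (2 * t₀)
          exact (hw _ (hIccI hmem)).scomp s hinner
        have h := aux_gronwall_zero
          (w := fun s => w (2 * t₀ - s))
          (w' := fun s => (-1 : ℝ) • q (V (u (2 * t₀ - s))))
          (a := t₀) (b := t₀ + ε) (K := 2 * K)
          refl_deriv
          (by
            intro s hs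
            have hmem : 2 * t₀ - s ∈ Icc (t₀ - ε) (t₀ + ε) := by
              constructor <;> [linarith [hs.2]; linarith [hs.1, hε]]
            simpa using hbound _ hmem)
          (by show w (2 * t₀ - t₀) = 0; rw [show (2:ℝ) * t₀ - t₀ = t₀ by ring]; exact hwt0)
        intro t ht
        have : w (2 * t₀ - (2 * t₀ - t)) = 0 :=
          h (2 * t₀ - t) ⟨by linarith [ht.2], by linarith [ht.1]⟩
        simpa using this
      intro t ht
      rcases le_total t t₀ with h | h
      · exact (hw_zero t).1 (hbwd t ⟨ht.1, h⟩)
      · exact (hw_zero t).1 (hfwd t ⟨h, ht.2⟩)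
    -- clopen argument
    set A : Set ℝ := {t | t ∈ I ∧ u t ∈ F} with hAdef
    have hAopen : IsOpen A := by
      rw [isOpen_iff_mem_nhds]
      rintro t₀ ⟨ht₀, hut₀⟩
      obtain ⟨ε, hε, hIccI, hIccF⟩ := key t₀ ht₀ hut₀
      have : Icc (t₀ - ε) (t₀ + ε) ∈ 𝓝 t₀ := by
        rw [← Real.closedBall_eq_Icc]
        exact Metric.closedBall_mem_nhds _ hε
      filter_upwards [this] with t ht
      exact ⟨hIccI ht, hIccF t ht⟩
    have hBopen : IsOpen (I \ A) := by
      rw [isOpen_iff_mem_nhds]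
      rintro t₀ ⟨ht₀, hnA⟩
      have hut₀ : u t₀ ∉ F := fun h => hnA ⟨ht₀, h⟩
      have h1 : u ⁻¹' ((F : Set (E × E))ᶜ) ∈ 𝓝 t₀ :=
        (hu t₀ ht₀).continuousAt (hFclosed.isOpen_compl.mem_nhds hut₀)
      filter_upwards [hIopen.mem_nhds ht₀, h1] with t htI htF
      exact ⟨htI, fun h => htF h.2⟩
    have hdisj : Disjoint A (I \ A) := disjoint_sdiff_self_right
    have hsub : I ⊆ A ∪ (I \ A) := by
      intro t ht
      by_cases h : t ∈ A
      · exact Or.inl h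
      · exact Or.inr ⟨ht, h⟩
    have h0A : (0:ℝ) ∈ A := ⟨h0I, Submodule.mem_prod.2 ⟨hg0, hg0'⟩⟩
    have hIA : I ⊆ A :=
      (hIord.isPreconnected).subset_left_of_subset_union hAopen hBopen hdisj hsub
        ⟨0, h0I, h0A⟩
    intro t ht
    exact (Submodule.mem_prod.1 (hIA ht).2).1
  · -- (b) → (a)
    intro hb x hx v hv
    obtain ⟨f, hf0, ε, hε, hf⟩ := ContDiffAt.exists_forall_mem_closedBall_exists_eq_forall_mem_Ioo_hasDerivAt₀ (hV.contDiffAt (x := (x, v))) 0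
    rw [zero_sub, zero_add] at hf
    set J : Set ℝ := Ioo (-ε) ε with hJdef
    have hJopen : IsOpen J := isOpen_Ioo
    have h0J : (0:ℝ) ∈ J := ⟨by linarith, hε⟩
    set g : ℝ → E := fun t => (f t).1 with hgdef
    have hfst : ∀ t ∈ J, HasDerivAt g ((f t).2) t := by
      intro t ht
      have := (ContinuousLinearMap.fst ℝ E E).hasFDerivAt.comp_hasDerivAt t (hf t ht)
      exact this
    have hsnd : ∀ t ∈ J, HasDerivAt (fun s => (f s).2) (S₂ (f t)) t := by
      intro t ht
      have := (ContinuousLinearMap.snd ℝ E E).hasFDerivAt.comp_hasDerivAt t (hf t ht)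
      exact this
    have hderiv_g : ∀ t ∈ J, deriv g t = (f t).2 := fun t ht => (hfst t ht).deriv
    have hfd : DifferentiableOn ℝ f J := fun t ht =>
      ((hf t ht).differentiableAt).differentiableWithinAt
    have hderiv_f : ∀ t ∈ J, deriv f t = V (f t) := fun t ht => (hf t ht).deriv
    have hfc : ContinuousOn f J := hfd.continuousOn
    have hf1 : ContDiffOn ℝ 1 f J := by
      have h01 : (0 : WithTop ℕ∞) + 1 = (1 : WithTop ℕ∞) := by norm_num
      rw [← h01, contDiffOn_succ_iff_deriv_of_isOpen hJopen]
      refine ⟨hfd, by simp, ?_⟩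
      rw [contDiffOn_zero]
      exact ContinuousOn.congr (hV.continuous.comp_continuousOn hfc) hderiv_f
    have hf2 : ContDiffOn ℝ 2 f J := by
      have h11 : (1 : WithTop ℕ∞) + 1 = (2 : WithTop ℕ∞) := by norm_num
      rw [← h11, contDiffOn_succ_iff_deriv_of_isOpen hJopen]
      refine ⟨hfd, by simp, ?_⟩
      exact ContDiffOn.congr (hV.comp_contDiffOn hf1) hderiv_f
    have hg2 : ContDiffOn ℝ 2 g J := contDiff_fst.comp_contDiffOn hf2
    have hgeo : ∀ t ∈ J, deriv (deriv g) t = S₂ (g t, deriv g t) := by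
      intro t ht
      have hev : deriv g =ᶠ[𝓝 t] (fun s => (f s).2) := by
        filter_upwards [hJopen.mem_nhds ht] with s hs
        exact hderiv_g s hs
      rw [hev.deriv_eq, (hsnd t ht).deriv]
      congr 1
      rw [hderiv_g t ht]
    have hg0 : g 0 = x := by rw [hgdef]; simp [hf0]
    have hdg0 : deriv g 0 = v := by rw [hderiv_g 0 h0J, hf0]
    have hmem : ∀ t ∈ J, g t ∈ F₁ :=
      hb g J hJopen (ordConnected_Ioo) h0J hg2 hgeo (hg0 ▸ hx) (hdg0 ▸ hv)
    have hmem' : ∀ t ∈ J, deriv g t ∈ F₁ := by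
      intro t ht
      rw [hderiv_g t ht]
      exact aux_deriv_mem F₁ hF₁ hJopen ht (hfst t ht) hmem
    have hdd : HasDerivAt (deriv g) (S₂ (f 0)) 0 := by
      have hev : (fun s => (f s).2) =ᶠ[𝓝 0] deriv g := by
        filter_upwards [hJopen.mem_nhds h0J] with s hs
        exact (hderiv_g s hs).symm
      exact (hsnd 0 h0J).congr_of_eventuallyEq hev.symm
    have := aux_deriv_mem F₁ hF₁ hJopen h0J hdd hmem'
    rwa [hf0] at this
end

section
/- Let E be a real Banach space, Σ ⊆ E nonempty and closed, and consider the flat spray on E (S₂ ≡ 0, geodesics are the affine lines t ↦ f + t·v). Let A := { (f, v) ∈ E × E : f ∈ Σ and lim_{t→0⁺} t⁻² · dist(f + t·v, Σ) = 0 } be the admissible set, and assume A is nonempty and closed in E × E. Then the following are equivalent: (a) for every (f, v) ∈ A and every t ≥ 0, f + t·v ∈ Σ (forward spray-invariance of Σ for the flat spray); (b) the flat spray, regarded as the vector field (f, v) ↦ (v, 0) on E × E, is adjacent tangent to A, i.e. for every (f, v) ∈ A, lim_{t→0⁺} t⁻¹ · dist_{E×E}((f + t·v, v), A) = 0. -/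
open Filter Topology Set

lemma key_approx {E : Type*} [NormedAddCommGroup E] [NormedSpace ℝ E] [CompleteSpace E]
    (T : Set E) (A : Set (E × E)) (hAne : A.Nonempty)
    (hAc : IsClosed A) (hAsub : ∀ q ∈ A, q.1 ∈ T)
    (htang : ∀ q ∈ A, Tendsto (fun s : ℝ => s⁻¹ * Metric.infDist ((q.1 + s • q.2, q.2) : E × E) A)
      (𝓝[>] (0:ℝ)) (𝓝 0))
    (p : E × E) (hp : p ∈ A) (t : ℝ) (ht : 0 < t) (ε : ℝ) (hε : 0 < ε) :
    Metric.infDist (p.1 + t • p.2) T ≤ ε * ((1 + t) * t + t ^ 2) := by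
  classical
  set S : Set (Set (ℝ × (E × E))) :=
    {C | (∀ x ∈ C, 0 ≤ x.1 ∧ x.1 ≤ t ∧ x.2 ∈ A) ∧
      ∀ x ∈ C, ∀ y ∈ C, x.1 ≤ y.1 →
        ‖y.2.2 - x.2.2‖ ≤ ε * (y.1 - x.1) ∧
        ‖y.2.1 - x.2.1 - (y.1 - x.1) • x.2.2‖ ≤
          ε * (1 + t) * (y.1 - x.1) + ε * (y.1 - x.1) ^ 2} with hS
  have hbase : ({((0 : ℝ), p)} : Set (ℝ × (E × E))) ∈ S := by
    constructor
    · rintro x rfl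
      exact ⟨le_rfl, le_of_lt ht, hp⟩
    · rintro x rfl y rfl _
      simp
  have hchain : ∀ c ⊆ S, IsChain (· ⊆ ·) c → c.Nonempty →
      ∃ ub ∈ S, ∀ s ∈ c, s ⊆ ub := by
    intro c hcS hchain _
    refine ⟨⋃₀ c, ⟨?_, ?_⟩, fun s hs => subset_sUnion_of_mem hs⟩
    · rintro x ⟨s, hs, hx⟩
      exact (hcS hs).1 x hx
    · rintro x ⟨s₁, hs₁, hx⟩ y ⟨s₂, hs₂, hy⟩ hxy
      rcases hchain.total hs₁ hs₂ with h | h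
      · exact (hcS hs₂).2 x (h hx) y hy hxy
      · exact (hcS hs₁).2 x hx y (h hy) hxy
  obtain ⟨M, hM0, hMmax⟩ := zorn_subset_nonempty S hchain _ hbase
  have hMS : M ∈ S := hMmax.prop
  have hp0 : ((0 : ℝ), p) ∈ M := hM0 rfl
  obtain ⟨memA, pair⟩ := hMS
  -- velocity bound
  have hvel : ∀ x ∈ M, ‖x.2.2‖ ≤ ‖p.2‖ + ε * t := by
    intro x hx
    have h := (pair _ hp0 _ hx (memA x hx).1).1
    simp only [sub_zero] at h
    have h2 : ‖x.2.2‖ ≤ ‖p.2‖ + ‖x.2.2 - p.2‖ := by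
      have := norm_add_le (x.2.2 - p.2) p.2
      simpa [sub_add_cancel, add_comm] using this
    have h3 : ε * x.1 ≤ ε * t := by
      have := (memA x hx).2.1
      nlinarith
    linarith
  set L : ℝ := ‖p.2‖ + ε * t + ε * (1 + t) + ε * t with hL
  have hL0 : 0 ≤ L := by positivity
  have hlip : ∀ x ∈ M, ∀ y ∈ M, x.1 ≤ y.1 → dist y.2 x.2 ≤ L * (y.1 - x.1) := by
    intro x hx y hy hxy
    obtain ⟨h1, h2⟩ := pair x hx y hy hxy
    have hΔt : y.1 - x.1 ≤ t := by
      have := (memA x hx).1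
      have := (memA y hy).2.1
      linarith
    have hΔ0 : 0 ≤ y.1 - x.1 := by linarith
    rw [Prod.dist_eq]
    have hfst : dist y.2.1 x.2.1 ≤ L * (y.1 - x.1) := by
      rw [dist_eq_norm]
      have htri : ‖y.2.1 - x.2.1‖ ≤ ‖y.2.1 - x.2.1 - (y.1 - x.1) • x.2.2‖ +
          ‖(y.1 - x.1) • x.2.2‖ := by
        have := norm_add_le (y.2.1 - x.2.1 - (y.1 - x.1) • x.2.2) ((y.1 - x.1) • x.2.2)
        simpa [sub_add_cancel] using this
      have hsm : ‖(y.1 - x.1) • x.2.2‖ = (y.1 - x.1) * ‖x.2.2‖ := by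
        rw [norm_smul, Real.norm_eq_abs, abs_of_nonneg hΔ0]
      have hv := hvel x hx
      have hnn : 0 ≤ ‖x.2.2‖ := norm_nonneg _
      nlinarith [mul_le_mul_of_nonneg_left hv hΔ0,
        mul_le_mul_of_nonneg_left hΔt (mul_nonneg hε.le hΔ0),
        mul_nonneg (mul_nonneg hε.le ht.le) hΔ0]
    have hsnd : dist y.2.2 x.2.2 ≤ L * (y.1 - x.1) := by
      rw [dist_eq_norm]
      nlinarith [h1, mul_nonneg (by positivity : (0:ℝ) ≤ ‖p.2‖ + ε * t + ε * t + ε * t) hΔ0]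
    exact max_le hfst hsnd
  set Ts : Set ℝ := Prod.fst '' M with hTs
  have hTsne : Ts.Nonempty := ⟨0, ⟨(0, p), hp0, rfl⟩⟩
  have hbdd : BddAbove Ts := ⟨t, by rintro r ⟨x, hx, rfl⟩; exact (memA x hx).2.1⟩
  set τ : ℝ := sSup Ts with hτ
  have hτle : τ ≤ t := csSup_le hTsne (by rintro r ⟨x, hx, rfl⟩; exact (memA x hx).2.1)
  have hτ0 : 0 ≤ τ := le_csSup hbdd ⟨(0, p), hp0, rfl⟩
  have hmemτ : ∀ x ∈ M, x.1 ≤ τ := fun x hx => le_csSup hbdd ⟨x, hx, rfl⟩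
  -- step 1 : sup attained
  have hatt : ∃ q, (τ, q) ∈ M := by
    by_contra hno
    push_neg at hno
    have hnoτ : ∀ x ∈ M, x.1 < τ := by
      intro x hx
      rcases lt_or_eq_of_le (hmemτ x hx) with h | h
      · exact h
      · exfalso
        apply hno x.2
        have hxx : (x.1, x.2) ∈ M := by simpa using hx
        rwa [h] at hxx
    have hseq : ∀ n : ℕ, ∃ x ∈ M, τ - 1 / (n + 1) < x.1 := by
      intro n
      have h1 : τ - 1 / ((n : ℝ) + 1) < τ := by
        have : (0 : ℝ) < 1 / ((n : ℝ) + 1) := by positivity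
        linarith
      obtain ⟨r, hr, hlt⟩ := exists_lt_of_lt_csSup hTsne h1
      obtain ⟨x, hx, rfl⟩ := hr
      exact ⟨x, hx, hlt⟩
    choose u hu h1u using hseq
    have hut : ∀ n, (u n).1 ≤ τ := fun n => hmemτ _ (hu n)
    have htendlow : Tendsto (fun n : ℕ => τ - 1 / ((n : ℝ) + 1)) atTop (𝓝 τ) := by
      have : Tendsto (fun n : ℕ => 1 / ((n : ℝ) + 1)) atTop (𝓝 0) :=
        tendsto_one_div_add_atTop_nhds_zero_nat
      have h2 := (tendsto_const_nhds (x := τ) (f := atTop (α := ℕ))).sub this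
      simpa using h2
    have htend : Tendsto (fun n => (u n).1) atTop (𝓝 τ) :=
      tendsto_of_tendsto_of_tendsto_of_le_of_le htendlow tendsto_const_nhds
        (fun n => (h1u n).le) hut
    have hcauchy : CauchySeq (fun n => (u n).2) := by
      apply cauchySeq_of_le_tendsto_0 (fun N : ℕ => L * (1 / ((N : ℝ) + 1)))
      · intro n m N hn hm
        have hb : ∀ k l : ℕ, N ≤ k → N ≤ l → (u k).1 ≤ (u l).1 →
            dist (u l).2 (u k).2 ≤ L * (1 / ((N : ℝ) + 1)) := by
          intro k l hk hl hkl
          have h1 := hlip _ (hu k) _ (hu l) hkl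
          have h2 : (u l).1 - (u k).1 ≤ 1 / ((N : ℝ) + 1) := by
            have h3 : τ - 1 / ((k : ℝ) + 1) < (u k).1 := h1u k
            have h4 : 1 / ((k : ℝ) + 1) ≤ 1 / ((N : ℝ) + 1) := by
              apply one_div_le_one_div_of_le (by positivity)
              have : (N : ℝ) ≤ (k : ℝ) := Nat.cast_le.mpr hk
              linarith
            have := hut l
            linarith
          nlinarith
        rcases le_total (u n).1 (u m).1 with h | h
        · rw [dist_comm]; exact hb n m hn hm h
        · exact hb m n hm hn h
      · have h0 : Tendsto (fun N : ℕ => 1 / ((N : ℝ) + 1)) atTop (𝓝 0) :=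
          tendsto_one_div_add_atTop_nhds_zero_nat
        have := h0.const_mul L
        simpa using this
    obtain ⟨q, hq⟩ := cauchySeq_tendsto_of_complete hcauchy
    have hqA : q ∈ A := hAc.mem_of_tendsto hq (Eventually.of_forall fun n => (memA _ (hu n)).2.2)
    have hq1 : Tendsto (fun n => (u n).2.1) atTop (𝓝 q.1) :=
      (continuous_fst.tendsto q).comp hq
    have hq2 : Tendsto (fun n => (u n).2.2) atTop (𝓝 q.2) :=
      (continuous_snd.tendsto q).comp hq
    have hins : insert (τ, q) M ∈ S := by
      constructor
      · rintro x (rfl | hx)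
        · exact ⟨hτ0, hτle, hqA⟩
        · exact memA x hx
      · rintro x (rfl | hx) y (rfl | hy) hxy
        · simp
        · exact absurd (hnoτ y hy) (not_lt.2 hxy)
        · -- x ∈ M, y = (τ, q)
          have hxlt : x.1 < τ := hnoτ x hx
          have hev : ∀ᶠ n in atTop, x.1 ≤ (u n).1 :=
            (htend.eventually (eventually_gt_nhds hxlt)).mono fun n h => h.le
          constructor
          · show ‖q.2 - x.2.2‖ ≤ ε * (τ - x.1)
            refine le_of_tendsto_of_tendsto ((hq2.sub tendsto_const_nhds).norm)
              (((htend.sub tendsto_const_nhds)).const_mul ε) ?_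
            filter_upwards [hev] with n hn
            exact (pair x hx _ (hu n) hn).1
          · show ‖q.1 - x.2.1 - (τ - x.1) • x.2.2‖ ≤
              ε * (1 + t) * (τ - x.1) + ε * (τ - x.1) ^ 2
            refine le_of_tendsto_of_tendsto
              (((hq1.sub tendsto_const_nhds).sub
                ((htend.sub tendsto_const_nhds).smul tendsto_const_nhds)).norm)
              ((((htend.sub tendsto_const_nhds)).const_mul (ε * (1 + t))).add
                (((htend.sub tendsto_const_nhds).pow 2).const_mul ε)) ?_
            filter_upwards [hev] with n hn
            exact (pair x hx _ (hu n) hn).2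
        · exact pair x hx y hy hxy
    have hsub := hMmax.2 hins (subset_insert _ _)
    exact hno q (hsub (mem_insert _ _))
  obtain ⟨q, hqM⟩ := hatt
  have hqA : q ∈ A := (memA _ hqM).2.2
  -- step 2 : τ = t
  have hτt : τ = t := by
    by_contra hne
    have hlt : τ < t := lt_of_le_of_ne hτle hne
    have h1 : ∀ᶠ s in 𝓝[>] (0:ℝ),
        s⁻¹ * Metric.infDist ((q.1 + s • q.2, q.2) : E × E) A < ε :=
      (htang q hqA).eventually_lt_const hε
    have h2 : ∀ᶠ s in 𝓝[>] (0:ℝ), s < t - τ :=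
      Filter.Eventually.filter_mono nhdsWithin_le_nhds (eventually_lt_nhds (by linarith))
    have h3 : ∀ᶠ s in 𝓝[>] (0:ℝ), (0:ℝ) < s := self_mem_nhdsWithin
    obtain ⟨s, hs1, hs2, hs3⟩ := (h1.and (h2.and h3)).exists
    have hslt := hs2
    have hs0 := hs3
    have hd : Metric.infDist ((q.1 + s • q.2, q.2) : E × E) A < ε * s := by
      have h := mul_lt_mul_of_pos_left hs1 hs0
      rw [← mul_assoc, mul_inv_cancel₀ (ne_of_gt hs0), one_mul] at h
      linarith [h]
    obtain ⟨q', hq'A, hq'd⟩ := (Metric.infDist_lt_iff hAne).1 hd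
    rw [Prod.dist_eq] at hq'd
    have hq'd2 : max (dist (q.1 + s • q.2) q'.1) (dist q.2 q'.2) < ε * s := hq'd
    have hc1 : ‖q'.1 - (q.1 + s • q.2)‖ ≤ ε * s := by
      have h1 : ‖q'.1 - (q.1 + s • q.2)‖ = dist (q.1 + s • q.2) q'.1 := by
        rw [dist_eq_norm, norm_sub_rev]
      rw [h1]
      exact le_of_lt (lt_of_le_of_lt (le_max_left _ _) hq'd2)
    have hc2 : ‖q'.2 - q.2‖ ≤ ε * s := by
      have h1 : ‖q'.2 - q.2‖ = dist q.2 q'.2 := by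
        rw [dist_eq_norm, norm_sub_rev]
      rw [h1]
      exact le_of_lt (lt_of_le_of_lt (le_max_right _ _) hq'd2)
    have hins : insert (τ + s, q') M ∈ S := by
      constructor
      · rintro x (rfl | hx)
        · exact ⟨show (0:ℝ) ≤ τ + s by linarith, show τ + s ≤ t by linarith, hq'A⟩
        · exact memA x hx
      · rintro x (rfl | hx) y (rfl | hy) hxy
        · simp
        · exfalso
          have h1 : τ + s ≤ y.1 := hxy
          have h2 := hmemτ y hy
          linarith
        · -- x ∈ M, y = (τ + s, q')
          have hxτ : x.1 ≤ τ := hmemτ x hx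
          have hA1 : ‖q.2 - x.2.2‖ ≤ ε * (τ - x.1) := (pair x hx (τ, q) hqM hxτ).1
          have hA2 : ‖q.1 - x.2.1 - (τ - x.1) • x.2.2‖ ≤
              ε * (1 + t) * (τ - x.1) + ε * (τ - x.1) ^ 2 := (pair x hx (τ, q) hqM hxτ).2
          have hΔ0 : 0 ≤ τ - x.1 := by linarith
          constructor
          · show ‖q'.2 - x.2.2‖ ≤ ε * (τ + s - x.1)
            have htri : ‖q'.2 - x.2.2‖ ≤ ‖q'.2 - q.2‖ + ‖q.2 - x.2.2‖ := by
              have := norm_add_le (q'.2 - q.2) (q.2 - x.2.2)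
              simpa [sub_add_sub_cancel] using this
            have : ε * (τ + s - x.1) = ε * s + ε * (τ - x.1) := by ring
            linarith
          · show ‖q'.1 - x.2.1 - (τ + s - x.1) • x.2.2‖ ≤
              ε * (1 + t) * (τ + s - x.1) + ε * (τ + s - x.1) ^ 2
            have hdecomp : q'.1 - x.2.1 - (τ + s - x.1) • x.2.2 =
                (q'.1 - (q.1 + s • q.2)) + (q.1 - x.2.1 - (τ - x.1) • x.2.2) +
                  s • (q.2 - x.2.2) := by
              module
            rw [hdecomp]
            have htri := norm_add_le ((q'.1 - (q.1 + s • q.2)) +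
              (q.1 - x.2.1 - (τ - x.1) • x.2.2)) (s • (q.2 - x.2.2))
            have htri2 := norm_add_le (q'.1 - (q.1 + s • q.2)) (q.1 - x.2.1 - (τ - x.1) • x.2.2)
            have hsm : ‖s • (q.2 - x.2.2)‖ = s * ‖q.2 - x.2.2‖ := by
              rw [norm_smul, Real.norm_eq_abs, abs_of_pos hs0]
            nlinarith [mul_le_mul_of_nonneg_left hA1 hs0.le,
              mul_nonneg (mul_nonneg hε.le ht.le) hs0.le,
              mul_nonneg (mul_nonneg hε.le hΔ0) hs0.le,
              mul_nonneg hε.le (mul_nonneg hs0.le hs0.le)]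
        · exact pair x hx y hy hxy
    have hsub := hMmax.2 hins (subset_insert _ _)
    have : τ + s ≤ τ := hmemτ _ (hsub (mem_insert _ _))
    linarith
  -- conclusion
  rw [hτt] at hqM
  have hfin := (pair (0, p) hp0 (t, q) hqM (by simpa using le_of_lt ht)).2
  simp only [sub_zero] at hfin
  have hq1T : q.1 ∈ T := hAsub q hqA
  calc Metric.infDist (p.1 + t • p.2) T ≤ dist (p.1 + t • p.2) q.1 :=
        Metric.infDist_le_dist_of_mem hq1T
    _ = ‖q.1 - p.1 - t • p.2‖ := by
        rw [dist_eq_norm, ← norm_neg]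
        congr 1
        abel
    _ ≤ ε * (1 + t) * t + ε * t ^ 2 := hfin
    _ = ε * ((1 + t) * t + t ^ 2) := by ring

/-- Nagumo–Brezis characterization for the flat spray on a Banach space: for a nonempty closed
set `Σ ⊆ E` whose admissible set `A` is nonempty and closed, forward spray-invariance of `Σ`
(affine geodesics starting admissibly stay in `Σ`) is equivalent to adjacent tangency of the
flat spray, viewed as the vector field `(f, v) ↦ (v, 0)` on `E × E`, to `A`. -/
theorem stmt_15 {E : Type*} [NormedAddCommGroup E] [NormedSpace ℝ E] [CompleteSpace E]
    (T : Set E) (hT : T.Nonempty) (hTc : IsClosed T)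
    (A : Set (E × E))
    (hA : A = {p : E × E | p.1 ∈ T ∧
      Tendsto (fun t : ℝ => (t ^ 2)⁻¹ * Metric.infDist (p.1 + t • p.2) T)
        (𝓝[>] (0 : ℝ)) (𝓝 0)})
    (hAne : A.Nonempty) (hAc : IsClosed A) :
    (∀ p ∈ A, ∀ t : ℝ, 0 ≤ t → p.1 + t • p.2 ∈ T) ↔
      (∀ p ∈ A,
        Tendsto (fun t : ℝ => t⁻¹ * Metric.infDist ((p.1 + t • p.2, p.2) : E × E) A)
          (𝓝[>] (0 : ℝ)) (𝓝 0)) := by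
  constructor
  · intro hinv p hp
    have hmem : ∀ r : ℝ, 0 ≤ r → ((p.1 + r • p.2, p.2) : E × E) ∈ A := by
      intro r hr
      rw [hA]
      refine ⟨hinv p hp r hr, ?_⟩
      have heq : ∀ᶠ s in 𝓝[>] (0:ℝ),
          (fun s : ℝ => (0:ℝ)) s =
            (s ^ 2)⁻¹ * Metric.infDist ((p.1 + r • p.2) + s • p.2) T := by
        filter_upwards [self_mem_nhdsWithin] with s hs
        have hs0 : (0:ℝ) < s := hs
        have hrw : p.1 + r • p.2 + s • p.2 = p.1 + (r + s) • p.2 := by module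
        rw [hrw, Metric.infDist_zero_of_mem (hinv p hp (r + s) (by linarith)), mul_zero]
      exact tendsto_const_nhds.congr' heq
    have heq2 : ∀ᶠ s in 𝓝[>] (0:ℝ),
        (fun s : ℝ => (0:ℝ)) s = s⁻¹ * Metric.infDist ((p.1 + s • p.2, p.2) : E × E) A := by
      filter_upwards [self_mem_nhdsWithin] with s hs
      have hs0 : (0:ℝ) < s := hs
      rw [Metric.infDist_zero_of_mem (hmem s hs0.le), mul_zero]
    exact tendsto_const_nhds.congr' heq2
  · intro htang p hp t ht
    have hAsub : ∀ q ∈ A, q.1 ∈ T := by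
      intro q hq; rw [hA] at hq; exact hq.1
    rcases eq_or_lt_of_le ht with rfl | htpos
    · simpa using hAsub p hp
    · have hdle : ∀ ε > (0:ℝ), Metric.infDist (p.1 + t • p.2) T ≤ ε * ((1 + t) * t + t ^ 2) :=
        fun ε hε => key_approx T A hAne hAc hAsub htang p hp t htpos ε hε
      have hC : (0:ℝ) < (1 + t) * t + t ^ 2 := by nlinarith
      have h0 : Metric.infDist (p.1 + t • p.2) T ≤ 0 := by
        by_contra h
        push_neg at h
        have h1 := hdle (Metric.infDist (p.1 + t • p.2) T / (2 * ((1 + t) * t + t ^ 2)))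
          (by positivity)
        have h2 : Metric.infDist (p.1 + t • p.2) T / (2 * ((1 + t) * t + t ^ 2)) *
            ((1 + t) * t + t ^ 2) = Metric.infDist (p.1 + t • p.2) T / 2 := by
          field_simp
        rw [h2] at h1
        linarith
      exact (hTc.mem_iff_infDist_zero hT).2 (le_antisymm h0 Metric.infDist_nonneg)
end

section
/- Let S₂ : E × E → E and let Σ ⊆ E be nonempty and closed. Then Σ is spray-invariant for S₂ if and only if the admissible set is invariant along geodesics: for every geodesic g : I → E of S₂ (0 ∈ I, I open) with (g(0), g'(0)) admissible, the pair (g(t), g'(t)) is admissible for all t ∈ I. (This is the linear-chart form of the theorem that a closed set is spray-invariant if and only if its admissible set is invariant under the geodesic flow.) -/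
open Filter Topology Set

/-- A pair `(f, v)` is admissible for `(S₂, Σ)`: `f ∈ Σ` and
`t⁻² · dist(f + t•v + (t²/2)•S₂(f,v), Σ) → 0` as `t → 0⁺`. -/
def Admissible {E : Type*} [NormedAddCommGroup E] [NormedSpace ℝ E]
    (S₂ : E × E → E) (T : Set E) (f v : E) : Prop :=
  f ∈ T ∧
    Filter.Tendsto
      (fun t : ℝ => (t ^ 2)⁻¹ *
        Metric.infDist (f + t • v + (t ^ 2 / 2) • S₂ (f, v)) T)
      (nhdsWithin (0 : ℝ) (Set.Ioi 0)) (nhds 0)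

/-- `Σ` is spray-invariant for `S₂`: every geodesic `g : I → E` (I an open interval containing 0)
with admissible initial data `(g 0, g' 0)` stays in `Σ`. -/
def SprayInvariant {E : Type*} [NormedAddCommGroup E] [NormedSpace ℝ E]
    (S₂ : E × E → E) (T : Set E) : Prop :=
  ∀ (g : ℝ → E) (I : Set ℝ), IsOpen I → I.OrdConnected → (0 : ℝ) ∈ I →
    ContDiffOn ℝ 2 g I →
    (∀ t ∈ I, deriv (deriv g) t = S₂ (g t, deriv g t)) →
    Admissible S₂ T (g 0) (deriv g 0) → ∀ t ∈ I, g t ∈ T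

/-- A nonempty closed set `Σ` is spray-invariant for `S₂` if and only if the admissible set is
invariant along geodesics: for every geodesic with admissible initial data, `(g t, g' t)` is
admissible for all `t` in the domain. -/
theorem stmt_16 {E : Type*} [NormedAddCommGroup E] [NormedSpace ℝ E] [CompleteSpace E]
    (S₂ : E × E → E) (T : Set E) (hT : T.Nonempty) (hTc : IsClosed T) :
    SprayInvariant S₂ T ↔
      (∀ (g : ℝ → E) (I : Set ℝ), IsOpen I → I.OrdConnected → (0 : ℝ) ∈ I →
        ContDiffOn ℝ 2 g I →
        (∀ t ∈ I, deriv (deriv g) t = S₂ (g t, deriv g t)) →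
        Admissible S₂ T (g 0) (deriv g 0) →
        ∀ t ∈ I, Admissible S₂ T (g t) (deriv g t)) := by
  constructor
  · intro h g I hIo hIc h0 hg hgeo hadm t ht
    have hmem : ∀ s ∈ I, g s ∈ T := h g I hIo hIc h0 hg hgeo hadm
    refine ⟨hmem t ht, ?_⟩
    set v := deriv g t with hv
    set w := deriv (deriv g) t with hw
    have hSw : S₂ (g t, v) = w := (hgeo t ht).symm
    have hdg1 : ContDiffOn ℝ 1 (deriv g) I := by
      have := hg.deriv_of_isOpen hIo (m := 1) (by norm_num)
      exact this
    have hdgd : HasDerivAt (deriv g) w t :=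
      ((hdg1.differentiableOn (by norm_num)).differentiableAt (hIo.mem_nhds ht)).hasDerivAt
    have hgd : ∀ x ∈ I, HasDerivAt g (deriv g x) x := fun x hx =>
      ((hg.differentiableOn (by norm_num)).differentiableAt (hIo.mem_nhds hx)).hasDerivAt
    rw [Metric.tendsto_nhdsWithin_nhds]
    intro ε hε
    have hbd := (hasDerivAt_iff_isLittleO.1 hdgd).bound (by positivity : (0:ℝ) < ε/2)
    rw [Metric.eventually_nhds_iff] at hbd
    obtain ⟨δ₁, hδ₁, h1⟩ := hbd
    obtain ⟨δ₂, hδ₂, h2⟩ := Metric.isOpen_iff.1 hIo t ht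
    refine ⟨min δ₁ δ₂, lt_min hδ₁ hδ₂, ?_⟩
    intro s hs hsd
    have hs0 : 0 < s := hs
    have hslt : s < min δ₁ δ₂ := by
      rwa [Real.dist_eq, sub_zero, abs_of_pos hs0] at hsd
    have hI' : ∀ u ∈ Icc (0:ℝ) s, t + u ∈ I := by
      intro u hu
      apply h2
      rw [Metric.mem_ball, Real.dist_eq]
      have h3 : |t + u - t| = u := by rw [add_sub_cancel_left, abs_of_nonneg hu.1]
      rw [h3]; exact lt_of_le_of_lt hu.2 (hslt.trans_le (min_le_right _ _))
    set φ : ℝ → E := fun u => g (t + u) - u • v - (u ^ 2 / 2) • w with hφ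
    have hφd : ∀ u ∈ Icc (0:ℝ) s,
        HasDerivWithinAt φ (deriv g (t + u) - v - u • w) (Icc 0 s) u := by
      intro u hu
      have ha : HasDerivAt (fun u : ℝ => g (t + u)) (deriv g (t + u)) u :=
        (hgd (t + u) (hI' u hu)).comp_const_add t u
      have hb : HasDerivAt (fun u : ℝ => u • v) v u := by
        simpa using (hasDerivAt_id u).smul_const v
      have hc : HasDerivAt (fun u : ℝ => (u ^ 2 / 2) • w) (u • w) u := by
        have := ((hasDerivAt_pow 2 u).div_const 2).smul_const w
        norm_num at this
        simpa using this
      exact ((ha.sub hb).sub hc).hasDerivWithinAt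
    have hbound : ∀ u ∈ Ico (0:ℝ) s, ‖deriv g (t + u) - v - u • w‖ ≤ ε / 2 * s := by
      intro u hu
      have hu1 : dist (t + u) t < δ₁ := by
        rw [Real.dist_eq, add_sub_cancel_left, abs_of_nonneg hu.1]
        exact hu.2.trans (hslt.trans_le (min_le_left _ _))
      have := h1 hu1
      rw [add_sub_cancel_left] at this
      calc ‖deriv g (t + u) - v - u • w‖ ≤ ε / 2 * ‖u‖ := this
        _ ≤ ε / 2 * s := by
            rw [Real.norm_eq_abs, abs_of_nonneg hu.1]
            exact mul_le_mul_of_nonneg_left hu.2.le (by positivity)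
    have key := norm_image_sub_le_of_norm_deriv_le_segment' hφd hbound s
      (right_mem_Icc.2 hs0.le)
    have hφ0 : φ 0 = g (t + 0) := by simp [hφ]
    have hr : g t + s • v + (s ^ 2 / 2) • S₂ (g t, v) - g (t + s) = -(φ s - φ 0) := by
      rw [hSw, hφ0, hφ]
      simp only [add_zero]
      abel
    have hts : g (t + s) ∈ T := hmem (t + s) (hI' s (right_mem_Icc.2 hs0.le))
    have hid : Metric.infDist (g t + s • v + (s ^ 2 / 2) • S₂ (g t, v)) T
        ≤ ε / 2 * s * (s - 0) := by
      calc Metric.infDist (g t + s • v + (s ^ 2 / 2) • S₂ (g t, v)) T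
          ≤ dist (g t + s • v + (s ^ 2 / 2) • S₂ (g t, v)) (g (t + s)) :=
            Metric.infDist_le_dist_of_mem hts
        _ = ‖φ s - φ 0‖ := by rw [dist_eq_norm, hr, norm_neg]
        _ ≤ ε / 2 * s * (s - 0) := key
    have hnn : 0 ≤ (s ^ 2)⁻¹ * Metric.infDist (g t + s • v + (s ^ 2 / 2) • S₂ (g t, v)) T :=
      mul_nonneg (by positivity) Metric.infDist_nonneg
    rw [Real.dist_eq, sub_zero, abs_of_nonneg hnn]
    have hfin : (s ^ 2)⁻¹ * Metric.infDist (g t + s • v + (s ^ 2 / 2) • S₂ (g t, v)) T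
        ≤ ε / 2 := by
      rw [sub_zero] at hid
      have h4 : (s ^ 2)⁻¹ * Metric.infDist (g t + s • v + (s ^ 2 / 2) • S₂ (g t, v)) T
          ≤ (s ^ 2)⁻¹ * (ε / 2 * s * s) :=
        mul_le_mul_of_nonneg_left hid (by positivity)
      have h5 : (s ^ 2)⁻¹ * (ε / 2 * s * s) = ε / 2 := by
        field_simp
      linarith
    linarith
  · intro h g I hIo hIc h0 hg hgeo hadm t ht
    exact (h g I hIo hIc h0 hg hgeo hadm t ht).1
end
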